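/- Let G be a Gδ subset of the Cantor space 2^ℕ. Then there exists a continuous map p : 2^ℕ → 2^ℕ such that (i) p restricted to G is a homeomorphic embedding into 2^ℕ ∖ Q and p maps 2^ℕ ∖ G into Q, where Q ⊆ 2^ℕ is the countable dense set of eventually-zero sequences, and (ii) for any two disjoint compact sets A, B ⊆ 2^ℕ, the intersection p(A) ∩ p(B) is finite. -/

import Mathlib

abbrev Cantor : Type := ℕ → Bool

/-- The countable dense set of eventually-zero sequences in `2^ℕ`,
a homeomorphic copy of the rationals. -/
def Qrat : Set Cantor := {x | ∃ N, ∀ n, N ≤ n → x n = false}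

namespace Stmt16Aux

open Set Topology Encodable

/-- The cylinder determined by a finite string. -/
def cyl (s : List Bool) : Set Cantor := {x | ∀ j, j < s.length → x j = s.getD j false}

/-- The prefix of `x` of length `k`, as a list. -/
def pre (x : Cantor) (k : ℕ) : List Bool := List.ofFn fun i : Fin k => x i

@[simp] lemma length_pre (x : Cantor) (k : ℕ) : (pre x k).length = k := List.length_ofFn

lemma getD_pre (x : Cantor) {j k : ℕ} (h : j < k) : (pre x k).getD j false = x j := by
  rw [List.getD_eq_getElem _ _ (by simpa using h)]
  simp [pre]

lemma mem_cyl_pre (x : Cantor) (k : ℕ) : x ∈ cyl (pre x k) := by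
  intro j hj
  rw [getD_pre x (by simpa using hj)]

lemma take_pre (x : Cantor) {j k : ℕ} (h : j ≤ k) : (pre x k).take j = pre x j := by
  apply List.ext_getElem (by simp [h])
  intro i h1 h2
  simp [pre, List.getElem_take]

lemma eq_pre_of_mem {x : Cantor} {s : List Bool} (hx : x ∈ cyl s) : s = pre x s.length := by
  apply List.ext_getElem (by simp)
  intro i h1 h2
  have hx' := hx i h1
  rw [List.getD_eq_getElem _ _ h1] at hx'
  simp [pre, ← hx']

lemma agree_of_mem_cyl {x y : Cantor} {s : List Bool} (hx : x ∈ cyl s) (hy : y ∈ cyl s)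
    {j : ℕ} (hj : j < s.length) : x j = y j := by
  rw [hx j hj, hy j hj]

lemma isClopen_cyl (s : List Bool) : IsClopen (cyl s) := by
  have : cyl s = ⋂ j ∈ Finset.range s.length, (fun x : Cantor => x j) ⁻¹' {s.getD j false} := by
    ext x
    simp [cyl]
  rw [this]
  apply isClopen_biInter_finset
  intro j _
  exact (isClopen_discrete _).preimage (continuous_apply j)

/-- `s` is the canonical (minimal length `≥ n`) cylinder-piece of `H n`. -/
def Good (H : ℕ → Set Cantor) (n : ℕ) (s : List Bool) : Prop :=
  n ≤ s.length ∧ cyl s ⊆ H n ∧ ∀ k, n ≤ k → k < s.length → ¬ cyl (s.take k) ⊆ H n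

lemma good_unique {H : ℕ → Set Cantor} {n : ℕ} {s t : List Bool} {x : Cantor}
    (hs : Good H n s) (ht : Good H n t) (hxs : x ∈ cyl s) (hxt : x ∈ cyl t) : s = t := by
  -- first an auxiliary claim, applied twice by symmetry
  have key : ∀ s t : List Bool, Good H n s → Good H n t → x ∈ cyl s → x ∈ cyl t →
      s.length ≤ t.length → s = t := by
    intro s t hs ht hxs hxt hle
    have hst : t.take s.length = s := by
      rw [eq_pre_of_mem hxt, take_pre _ (by simpa using hle), ← eq_pre_of_mem hxs]
    rcases lt_or_eq_of_le hle with hlt | heq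
    · have hsub : cyl (t.take s.length) ⊆ H n := by rw [hst]; exact hs.2.1
      exact absurd hsub (ht.2.2 s.length hs.1 hlt)
    · rw [← hst, heq, List.take_length]
  rcases le_total s.length t.length with h | h
  · exact key s t hs ht hxs hxt h
  · exact (key t s ht hs hxt hxs h).symm

lemma exists_pre_subset {V : Set Cantor} (hV : IsOpen V) {x : Cantor} (hx : x ∈ V) (n : ℕ) :
    ∃ k, n ≤ k ∧ cyl (pre x k) ⊆ V := by
  obtain ⟨I, u, hu, hIu⟩ := isOpen_pi_iff.1 hV x hx
  refine ⟨max n (I.sup id + 1), le_max_left _ _, ?_⟩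
  intro y hy
  apply hIu
  intro a ha
  have ha' : a < max n (I.sup id + 1) :=
    lt_of_lt_of_le (Nat.lt_succ_of_le (Finset.le_sup (f := id) ha)) (le_max_right _ _)
  have := hy a (by simpa using ha')
  rw [getD_pre x ha'] at this
  rw [this]
  exact (hu a ha).2

lemma exists_good {H : ℕ → Set Cantor} {n : ℕ} (hH : IsOpen (H n)) {x : Cantor}
    (hx : x ∈ H n) : ∃ s, Good H n s ∧ x ∈ cyl s := by
  have hex : ∃ k, n ≤ k ∧ cyl (pre x k) ⊆ H n := exists_pre_subset hH hx n
  classical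
  refine ⟨pre x (Nat.find hex), ⟨by simpa using (Nat.find_spec hex).1, ?_, ?_⟩, mem_cyl_pre _ _⟩
  · simpa using (Nat.find_spec hex).2
  · intro k hk hklt
    rw [length_pre] at hklt
    rw [take_pre x (le_of_lt hklt)]
    intro hsub
    exact Nat.find_min hex hklt ⟨hk, hsub⟩

open scoped Classical in
/-- The map `p`. -/
noncomputable def pm (H : ℕ → Set Cantor) (x : Cantor) (m : ℕ) : Bool :=
  decide (∃ s : List Bool, Good H m.unpair.1 s ∧ Encodable.encode s = m.unpair.2 ∧ x ∈ cyl s)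

lemma pm_true_iff {H : ℕ → Set Cantor} {x : Cantor} {m : ℕ} :
    pm H x m = true ↔
      ∃ s : List Bool, Good H m.unpair.1 s ∧ Encodable.encode s = m.unpair.2 ∧ x ∈ cyl s := by
  simp [pm]

lemma pm_pair_true_iff {H : ℕ → Set Cantor} {x : Cantor} {n i : ℕ} :
    pm H x (Nat.pair n i) = true ↔
      ∃ s : List Bool, Good H n s ∧ Encodable.encode s = i ∧ x ∈ cyl s := by
  rw [pm_true_iff, Nat.unpair_pair]

lemma pm_pair_encode_true {H : ℕ → Set Cantor} {x : Cantor} {n : ℕ} {s : List Bool}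
    (hs : Good H n s) (hx : x ∈ cyl s) :
    pm H x (Nat.pair n (Encodable.encode s)) = true :=
  pm_pair_true_iff.2 ⟨s, hs, rfl, hx⟩

lemma good_of_pm_pair_encode_true {H : ℕ → Set Cantor} {y : Cantor} {n : ℕ} {s : List Bool}
    (h : pm H y (Nat.pair n (Encodable.encode s)) = true) : Good H n s ∧ y ∈ cyl s := by
  obtain ⟨t, ht, hts, hyt⟩ := pm_pair_true_iff.1 h
  obtain rfl : t = s := Encodable.encode_injective hts
  exact ⟨ht, hyt⟩

lemma mem_of_pm_true {H : ℕ → Set Cantor} {x : Cantor} {m : ℕ} (h : pm H x m = true) :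
    x ∈ H m.unpair.1 := by
  obtain ⟨s, hs, _, hxs⟩ := pm_true_iff.1 h
  exact hs.2.1 hxs

lemma continuous_pm (H : ℕ → Set Cantor) : Continuous (pm H) := by
  apply continuous_pi
  intro m
  by_cases h : ∃ s : List Bool, Good H m.unpair.1 s ∧ Encodable.encode s = m.unpair.2
  · obtain ⟨s, hs, hi⟩ := h
    have heq : (fun x => pm H x m) = (cyl s).boolIndicator := by
      funext x
      by_cases hx : x ∈ cyl s
      · rw [((cyl s).mem_iff_boolIndicator x).1 hx]
        exact pm_true_iff.2 ⟨s, hs, hi, hx⟩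
      · rw [((cyl s).notMem_iff_boolIndicator x).1 hx]
        rw [← Bool.not_eq_true]
        intro htrue
        obtain ⟨t, ht, hti, hxt⟩ := pm_true_iff.1 htrue
        obtain rfl : t = s := Encodable.encode_injective (hti.trans hi.symm)
        exact hx hxt
    rw [heq]
    exact (continuous_boolIndicator_iff_isClopen _).2 (isClopen_cyl s)
  · have heq : (fun x => pm H x m) = fun _ => false := by
      funext x
      rw [← Bool.not_eq_true]
      intro htrue
      obtain ⟨t, ht, hti, _⟩ := pm_true_iff.1 htrue
      exact h ⟨t, ht, hti⟩
    rw [heq]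
    exact continuous_const

end Stmt16Aux

open Stmt16Aux Set Topology

/-- For every `Gδ` set `G ⊆ 2^ℕ` there is a continuous `p : 2^ℕ → 2^ℕ`
embedding `G` into `2^ℕ ∖ Q`, mapping `2^ℕ ∖ G` into `Q`, and such that
images of disjoint compact sets meet in a finite set. -/
theorem stmt16 (G : Set Cantor) (hG : IsGδ G) :
    ∃ p : Cantor → Cantor, Continuous p ∧
      Topology.IsEmbedding (fun x : G => p x) ∧
      p '' G ⊆ Qratᶜ ∧ p '' Gᶜ ⊆ Qrat ∧
      ∀ A B : Set Cantor, IsCompact A → IsCompact B → Disjoint A B →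
        (p '' A ∩ p '' B).Finite := by
  classical
  obtain ⟨f, hfo, hfG⟩ := hG.eq_iInter_nat
  set H : ℕ → Set Cantor := fun n => ⋂ k ∈ Finset.range (n + 1), f k with hH
  have hHo : ∀ n, IsOpen (H n) := fun n => isOpen_biInter_finset fun k _ => hfo k
  have hGH : ∀ x ∈ G, ∀ n, x ∈ H n := by
    intro x hx n
    simp only [hH, Set.mem_iInter]
    intro k _
    rw [hfG] at hx
    exact Set.mem_iInter.1 hx k
  have hHf : ∀ {k n : ℕ}, k ≤ n → H n ⊆ f k := by
    intro k n hk x hx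
    simp only [hH, Set.mem_iInter] at hx
    exact hx k (Finset.mem_range.2 (Nat.lt_succ_of_le hk))
  refine ⟨pm H, continuous_pm H, ?_, ?_, ?_, ?_⟩
  · -- embedding on G
    rw [Topology.isEmbedding_iff]
    constructor
    · rw [isInducing_iff_nhds]
      intro a
      apply le_antisymm
      · exact Filter.tendsto_iff_comap.1
          (((continuous_pm H).comp continuous_subtype_val).tendsto a)
      · intro U hU
        rw [nhds_subtype_eq_comap] at hU
        obtain ⟨V, hV, hVU⟩ := Filter.mem_comap.1 hU
        obtain ⟨V', hV'V, hV'o, haV'⟩ := mem_nhds_iff.1 hV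
        obtain ⟨L, -, hLV⟩ := exists_pre_subset hV'o haV' 0
        obtain ⟨s, hs, has⟩ := exists_good (hHo L) (hGH a a.2 L)
        refine Filter.mem_comap.2 ⟨{z : Cantor | z (Nat.pair L (Encodable.encode s)) = true},
          ?_, ?_⟩
        · refine IsOpen.mem_nhds ?_ ?_
          · show IsOpen ((fun z : Cantor => z (Nat.pair L (Encodable.encode s))) ⁻¹'
              {b : Bool | b = true})
            exact (isOpen_discrete _).preimage (continuous_apply _)
          · exact pm_pair_encode_true hs has
        · intro b hb
          apply hVU
          apply Set.mem_preimage.2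
          apply hV'V
          apply hLV
          intro j hj
          rw [length_pre] at hj
          rw [getD_pre _ hj]
          have hbs : (b : Cantor) ∈ cyl s := (good_of_pm_pair_encode_true hb).2
          exact agree_of_mem_cyl hbs has (lt_of_lt_of_le hj hs.1)
    · -- injectivity
      intro a b hab
      apply Subtype.ext
      funext j
      obtain ⟨s, hs, has⟩ := exists_good (hHo (j + 1)) (hGH a a.2 (j + 1))
      have h1 : pm H (a : Cantor) (Nat.pair (j + 1) (Encodable.encode s)) = true :=
        pm_pair_encode_true hs has
      have h2 : pm H (b : Cantor) (Nat.pair (j + 1) (Encodable.encode s)) = true :=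
        (congrFun hab (Nat.pair (j + 1) (Encodable.encode s))).symm.trans h1
      have hbs : (b : Cantor) ∈ cyl s := (good_of_pm_pair_encode_true h2).2
      exact agree_of_mem_cyl has hbs (lt_of_lt_of_le (Nat.lt_succ_self j) hs.1)
  · -- image of G avoids Qrat
    rintro _ ⟨x, hx, rfl⟩ hmem
    obtain ⟨N, hN⟩ := hmem
    obtain ⟨s, hs, hxs⟩ := exists_good (hHo N) (hGH x hx N)
    have h1 : pm H x (Nat.pair N (Encodable.encode s)) = true := pm_pair_encode_true hs hxs
    have h2 := hN (Nat.pair N (Encodable.encode s)) (Nat.left_le_pair N _)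
    rw [h1] at h2
    exact Bool.noConfusion h2
  · -- image of complement lands in Qrat
    rintro _ ⟨x, hx, rfl⟩
    rw [hfG] at hx
    obtain ⟨k, hk⟩ : ∃ k, x ∉ f k := by
      by_contra hcon
      push_neg at hcon
      exact hx (Set.mem_iInter.2 hcon)
    have hT : {m : ℕ | pm H x m = true}.Finite := by
      have hsub : {m : ℕ | pm H x m = true} ⊆
          ⋃ n ∈ Finset.range k, {m : ℕ | m.unpair.1 = n ∧ pm H x m = true} := by
        intro m hm
        have hxm : x ∈ H m.unpair.1 := mem_of_pm_true hm
        have hlt : m.unpair.1 < k := by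
          by_contra hge
          push_neg at hge
          exact hk (hHf hge hxm)
        exact Set.mem_biUnion (Finset.mem_range.2 hlt) ⟨rfl, hm⟩
      apply Set.Finite.subset _ hsub
      apply Set.Finite.biUnion (Finset.range k).finite_toSet
      intro n _
      apply Set.Subsingleton.finite
      rintro m ⟨hm1, hm2⟩ m' ⟨hm'1, hm'2⟩
      obtain ⟨s, hs, hsi, hxs⟩ := pm_true_iff.1 hm2
      obtain ⟨t, ht, hti, hxt⟩ := pm_true_iff.1 hm'2
      rw [hm1] at hs
      rw [hm'1] at ht
      have hst : s = t := good_unique hs ht hxs hxt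
      have : m = Nat.pair n (Encodable.encode s) := by
        rw [hsi, ← hm1, Nat.pair_unpair]
      have that : m' = Nat.pair n (Encodable.encode s) := by
        rw [hst, hti, ← hm'1, Nat.pair_unpair]
      rw [this, that]
    obtain ⟨N, hN⟩ := hT.bddAbove
    refine ⟨N + 1, fun m hm => ?_⟩
    rw [← Bool.not_eq_true]
    intro htrue
    exact absurd (hN htrue) (by omega)
  · -- finite intersection of images of disjoint compacts
    intro A B hA hB hAB
    -- Step 1: uniform separation level N
    obtain ⟨N, hsep⟩ : ∃ N, ∀ x ∈ A, ∀ y ∈ B, ∃ j < N, x j ≠ y j := by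
      have hcov : A ×ˢ B ⊆ ⋃ j : ℕ, {q : Cantor × Cantor | q.1 j ≠ q.2 j} := by
        rintro ⟨x, y⟩ ⟨hx, hy⟩
        have hxy : x ≠ y := by
          rintro rfl
          exact Set.disjoint_left.1 hAB hx hy
        obtain ⟨j, hj⟩ := Function.ne_iff.1 hxy
        exact Set.mem_iUnion.2 ⟨j, hj⟩
      have hUo : ∀ j : ℕ, IsOpen {q : Cantor × Cantor | q.1 j ≠ q.2 j} := by
        intro j
        have : {q : Cantor × Cantor | q.1 j ≠ q.2 j} =
            (fun q : Cantor × Cantor => (q.1 j, q.2 j)) ⁻¹' {p : Bool × Bool | p.1 ≠ p.2} := rfl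
        rw [this]
        exact (isOpen_discrete _).preimage
          (((continuous_apply j).comp continuous_fst).prodMk
            ((continuous_apply j).comp continuous_snd))
      obtain ⟨t, ht⟩ := (hA.prod hB).elim_finite_subcover _ hUo hcov
      refine ⟨t.sup id + 1, fun x hx y hy => ?_⟩
      obtain ⟨j, hjt, hj⟩ := Set.mem_iUnion₂.1 (ht (Set.mk_mem_prod hx hy))
      exact ⟨j, Nat.lt_succ_of_le (Finset.le_sup (f := id) hjt), hj⟩
    -- Step 2: coordinates of elements of the intersection are uniformly bounded
    have key : ∀ z ∈ pm H '' A ∩ pm H '' B, ∀ m, z m = true →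
        ∃ (n : ℕ) (s : List Bool), m = Nat.pair n (Encodable.encode s) ∧ n < N ∧
          s.length < N := by
      rintro z ⟨⟨x, hxA, rfl⟩, ⟨y, hyB, hyz⟩⟩ m hm
      obtain ⟨s, hs, hsi, hxs⟩ := pm_true_iff.1 hm
      have hym : pm H y m = true := by rw [hyz]; exact hm
      obtain ⟨t, ht, hti, hyt⟩ := pm_true_iff.1 hym
      have hts : t = s := Encodable.encode_injective (hti.trans hsi.symm)
      rw [hts] at hyt
      obtain ⟨j, hjN, hjne⟩ := hsep x hxA y hyB
      have hlen : s.length < N := by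
        by_contra hge
        push_neg at hge
        exact hjne (agree_of_mem_cyl hxs hyt (lt_of_lt_of_le hjN hge))
      refine ⟨m.unpair.1, s, ?_, lt_of_le_of_lt hs.1 hlen, hlen⟩
      rw [hsi, Nat.pair_unpair]
    -- Step 3: therefore the intersection injects into subsets of a fixed finite set
    set M : Set ℕ := (fun q : ℕ × List Bool => Nat.pair q.1 (Encodable.encode q.2)) ''
      (Set.Iio N ×ˢ {s : List Bool | s.length < N}) with hM
    have hMfin : M.Finite :=
      ((Set.finite_Iio N).prod (List.finite_length_lt Bool N)).image _
    have hsub : pm H '' A ∩ pm H '' B ⊆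
        (fun T : Set ℕ => (fun m => decide (m ∈ T) : Cantor)) '' {T : Set ℕ | T ⊆ M} := by
      intro z hz
      refine ⟨{m : ℕ | z m = true}, ?_, ?_⟩
      · intro m hm
        obtain ⟨n, s, rfl, hnN, hsN⟩ := key z hz m hm
        exact ⟨(n, s), ⟨hnN, hsN⟩, rfl⟩
      · funext m
        simp only [Set.mem_setOf_eq]
        by_cases h : z m = true
        · simp [h]
        · rw [Bool.not_eq_true] at h
          simp [h]
    exact Set.Finite.subset (hMfin.finite_subsets.image _) hsub
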